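/- Let η₁, ..., ηₙ be vectors in a real inner product space with ⟨ηᵢ, ηⱼ⟩ = κ for i ≠ j (κ ≠ 0) and ‖ηᵢ‖² ≠ κ for all i, such that ηₙ lies in the span of η₁, ..., η_{n-1}. Then Σ_{i=1}^{n} ηᵢ/(‖ηᵢ‖² - κ) = 0. -/

import Mathlib

open RealInnerProductSpace

/-- If η₁, ..., ηₙ have pairwise inner products κ ≠ 0, ‖ηᵢ‖² ≠ κ for all i,
and ηₙ lies in the span of η₁, ..., η_{n-1}, then Σ ηᵢ/(‖ηᵢ‖² - κ) = 0. -/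
theorem stmt4 {E : Type*} [NormedAddCommGroup E] [InnerProductSpace ℝ E]
    {n : ℕ} (η : Fin (n + 1) → E) (κ : ℝ) (hκ : κ ≠ 0)
    (hinner : ∀ i j, i ≠ j → ⟪η i, η j⟫ = κ)
    (hnorm : ∀ i, ‖η i‖ ^ 2 ≠ κ)
    (hdep : η (Fin.last n) ∈
      Submodule.span ℝ (Set.range fun i : Fin n => η i.castSucc)) :
    ∑ i : Fin (n + 1), (‖η i‖ ^ 2 - κ)⁻¹ • η i = 0 := by
  obtain ⟨ρ, hρ⟩ := (Submodule.mem_span_range_iff_exists_fun ℝ).mp hdep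
  have hne : ∀ j : Fin n, j.castSucc ≠ Fin.last n := fun j => (Fin.castSucc_lt_last j).ne
  set S : ℝ := ∑ i, ρ i with hS
  have hlast : ‖η (Fin.last n)‖ ^ 2 = S * κ := by
    have h1 : ⟪η (Fin.last n), η (Fin.last n)⟫ = ∑ i, ρ i * κ := by
      nth_rewrite 2 [← hρ]
      rw [inner_sum]
      exact Finset.sum_congr rfl fun i _ => by
        rw [real_inner_smul_right, hinner _ _ (Ne.symm (hne i))]
    rw [real_inner_self_eq_norm_sq] at h1
    rw [h1, ← Finset.sum_mul]
  have h2 : ∀ j : Fin n, ρ j * (‖η j.castSucc‖ ^ 2 - κ) = κ * (1 - S) := by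
    intro j
    have h3 : ⟪η j.castSucc, η (Fin.last n)⟫ = κ := hinner _ _ (hne j)
    have h4 : ⟪η j.castSucc, η (Fin.last n)⟫
        = ∑ i, ρ i * ⟪η j.castSucc, η i.castSucc⟫ := by
      conv_lhs => rw [← hρ]
      rw [inner_sum]
      exact Finset.sum_congr rfl fun i _ => by rw [real_inner_smul_right]
    have h5 : ∀ i : Fin n, ρ i * ⟪η j.castSucc, η i.castSucc⟫
        = ρ i * κ + (if i = j then ρ j * (‖η j.castSucc‖ ^ 2 - κ) else 0) := by
      intro i
      by_cases h : i = j
      · subst h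
        rw [real_inner_self_eq_norm_sq]
        simp
        ring
      · rw [hinner j.castSucc i.castSucc (fun hc => h (Fin.castSucc_injective _ hc).symm)]
        simp [h]
    rw [h4, Finset.sum_congr rfl (fun i _ => h5 i), Finset.sum_add_distrib,
      Finset.sum_ite_eq' Finset.univ j, ← Finset.sum_mul] at h3
    simp only [Finset.mem_univ, if_true] at h3
    linarith [h3]
  have hκS : κ * (1 - S) ≠ 0 := by
    intro h
    rcases mul_eq_zero.mp h with h | h
    · exact hκ h
    · have hS1 : S = 1 := by linarith
      exact hnorm (Fin.last n) (by rw [hlast, hS1, one_mul])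
  rw [Fin.sum_univ_castSucc]
  have hco : ∀ j : Fin n, (‖η j.castSucc‖ ^ 2 - κ)⁻¹ • η j.castSucc
      = (κ * (1 - S))⁻¹ • (ρ j • η j.castSucc) := by
    intro j
    rw [smul_smul]
    congr 1
    have hd : ‖η j.castSucc‖ ^ 2 - κ ≠ 0 := sub_ne_zero.mpr (hnorm _)
    have h1S : 1 - S ≠ 0 := right_ne_zero_of_mul hκS
    field_simp
    linarith [h2 j]
  calc (∑ j : Fin n, (‖η j.castSucc‖ ^ 2 - κ)⁻¹ • η j.castSucc)
        + (‖η (Fin.last n)‖ ^ 2 - κ)⁻¹ • η (Fin.last n)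
      = (κ * (1 - S))⁻¹ • η (Fin.last n)
        + (-(κ * (1 - S)))⁻¹ • η (Fin.last n) := by
        rw [Finset.sum_congr rfl (fun j _ => hco j), ← Finset.smul_sum, hρ]
        congr 2
        rw [hlast]; ring
    _ = 0 := by rw [inv_neg, neg_smul, add_neg_cancel]
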